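/- Let φ: (M³,g) → (N²,h) be a submersive semi-conformal map with unit vertical field U, and let X₁, X₂ be horizontal lifts of unit vector fields X̄₁, X̄₂ on N. Then (i) the horizontal part of [U, X_a] vanishes for a = 1,2, and (ii) U(g(U, [X₁, X₂])) = −dμ♭(X₁, X₂), where μ is the mean curvature vector of the fibres. -/

import Mathlib

open scoped BigOperators

noncomputable section

/-- Partial derivative of `f` in the `i`-th coordinate direction. -/
def pd {n : ℕ} (f : (Fin n → ℝ) → ℝ) (i : Fin n) (x : Fin n → ℝ) : ℝ :=
  fderiv ℝ f x (Pi.single i 1)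

/-- Pointwise inverse of a metric (the components `g^{ij}`). -/
def ginv {n : ℕ} (g : (Fin n → ℝ) → Matrix (Fin n) (Fin n) ℝ) (x : Fin n → ℝ) :
    Matrix (Fin n) (Fin n) ℝ := (g x)⁻¹

/-- A smooth Riemannian metric in coordinates. -/
def IsMetric {n : ℕ} (g : (Fin n → ℝ) → Matrix (Fin n) (Fin n) ℝ) : Prop :=
  (∀ i j, ContDiff ℝ (⊤ : ℕ∞) fun x => g x i j) ∧ ∀ x, (g x).IsSymm ∧ (g x).PosDef

/-- A smooth vector field (or componentwise-smooth family). -/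
def SmoothVF {n : ℕ} (X : (Fin n → ℝ) → Fin n → ℝ) : Prop :=
  ∀ k, ContDiff ℝ (⊤ : ℕ∞) fun x => X x k

/-- Christoffel symbols `Γ^k_{ij}` of the metric `g`. -/
def christoffel {n : ℕ} (g : (Fin n → ℝ) → Matrix (Fin n) (Fin n) ℝ)
    (k i j : Fin n) (x : Fin n → ℝ) : ℝ :=
  (1 / 2) * ∑ l, ginv g x k l *
    (pd (fun y => g y l j) i x + pd (fun y => g y l i) j x - pd (fun y => g y i j) l x)

/-- Covariant derivative `(∇_X Y)^k` of the Levi-Civita connection of `g`. -/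
def covD {n : ℕ} (g : (Fin n → ℝ) → Matrix (Fin n) (Fin n) ℝ)
    (X Y : (Fin n → ℝ) → Fin n → ℝ) (x : Fin n → ℝ) (k : Fin n) : ℝ :=
  (∑ i, X x i * pd (fun y => Y y k) i x) + ∑ i, ∑ j, christoffel g k i j x * X x i * Y x j

/-- The Lie bracket of vector fields, `[X,Y]^k = X^i ∂_i Y^k - Y^i ∂_i X^k`. -/
def bracket {n : ℕ} (X Y : (Fin n → ℝ) → Fin n → ℝ) (x : Fin n → ℝ) (k : Fin n) : ℝ :=
  ∑ i, (X x i * pd (fun y => Y y k) i x - Y x i * pd (fun y => X y k) i x)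

/-- `φ : (M³,g) → (N²,h)` is semi-conformal with dilation `λ`, in the local-coordinate
characterization `g^{ij} φ^α_i φ^β_j = λ² h^{αβ}`. -/
def SemiConformal (g : (Fin 3 → ℝ) → Matrix (Fin 3) (Fin 3) ℝ)
    (h : (Fin 2 → ℝ) → Matrix (Fin 2) (Fin 2) ℝ)
    (φ : (Fin 3 → ℝ) → Fin 2 → ℝ) (lam : (Fin 3 → ℝ) → ℝ) : Prop :=
  ∀ x α β, (∑ i, ∑ j, ginv g x i j * pd (fun y => φ y α) i x * pd (fun y => φ y β) j x)
    = lam x ^ 2 * ginv h (φ x) α β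

/-- A vector field is vertical when it lies in `ker dφ`. -/
def Vertical (φ : (Fin 3 → ℝ) → Fin 2 → ℝ) (U : (Fin 3 → ℝ) → Fin 3 → ℝ) : Prop :=
  ∀ x α, (∑ i, pd (fun y => φ y α) i x * U x i) = 0

/-- A vector field of unit length for `g`. -/
def UnitField (g : (Fin 3 → ℝ) → Matrix (Fin 3) (Fin 3) ℝ)
    (U : (Fin 3 → ℝ) → Fin 3 → ℝ) : Prop :=
  ∀ x, (∑ i, ∑ j, g x i j * U x i * U x j) = 1

/-- The dual 1-form `X♭ = g(X,·)`. -/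
def flat (g : (Fin 3 → ℝ) → Matrix (Fin 3) (Fin 3) ℝ)
    (X : (Fin 3 → ℝ) → Fin 3 → ℝ) (j : Fin 3) (x : Fin 3 → ℝ) : ℝ :=
  ∑ k, g x j k * X x k

/-- Horizontal projection (relative to the unit vertical field `U`):
`H X = X - g(X,U) U`. -/
def Hproj (g : (Fin 3 → ℝ) → Matrix (Fin 3) (Fin 3) ℝ)
    (U X : (Fin 3 → ℝ) → Fin 3 → ℝ) (x : Fin 3 → ℝ) (k : Fin 3) : ℝ :=
  X x k - (∑ i, ∑ j, g x i j * X x i * U x j) * U x k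

/-- The mean curvature vector `μ = ∇_U U` of the fibres (`U` the unit vertical field). -/
def meanCurv (g : (Fin 3 → ℝ) → Matrix (Fin 3) (Fin 3) ℝ)
    (U : (Fin 3 → ℝ) → Fin 3 → ℝ) (x : Fin 3 → ℝ) (k : Fin 3) : ℝ :=
  covD g U U x k

/-- Lie derivative of the metric: `(L_E g)_{ij} = E^k ∂_k g_{ij} + g_{kj} ∂_i E^k + g_{ik} ∂_j E^k`. -/
def lieD {n : ℕ} (g : (Fin n → ℝ) → Matrix (Fin n) (Fin n) ℝ)
    (E : (Fin n → ℝ) → Fin n → ℝ) (i j : Fin n) (x : Fin n → ℝ) : ℝ :=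
  (∑ k, E x k * pd (fun y => g y i j) k x)
    + (∑ k, g x k j * pd (fun y => E y k) i x)
    + ∑ k, g x i k * pd (fun y => E y k) j x


section AuxLemmas

theorem cdAt {n : ℕ} {f : (Fin n → ℝ) → ℝ} {x : Fin n → ℝ} (hf : ContDiff ℝ (⊤:ℕ∞) f) :
    DifferentiableAt ℝ f x :=
  (hf.differentiable (by simp)).differentiableAt

theorem pd_add {n : ℕ} {f g : (Fin n → ℝ) → ℝ} {i : Fin n} {x : Fin n → ℝ}
    (hf : ContDiff ℝ (⊤:ℕ∞) f) (hg : ContDiff ℝ (⊤:ℕ∞) g) :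
    pd (fun y => f y + g y) i x = pd f i x + pd g i x := by
  unfold pd; rw [fderiv_fun_add (cdAt hf) (cdAt hg)]; rfl

theorem pd_sub {n : ℕ} {f g : (Fin n → ℝ) → ℝ} {i : Fin n} {x : Fin n → ℝ}
    (hf : ContDiff ℝ (⊤:ℕ∞) f) (hg : ContDiff ℝ (⊤:ℕ∞) g) :
    pd (fun y => f y - g y) i x = pd f i x - pd g i x := by
  unfold pd; rw [fderiv_fun_sub (cdAt hf) (cdAt hg)]; rfl

theorem pd_neg {n : ℕ} {f : (Fin n → ℝ) → ℝ} {i : Fin n} {x : Fin n → ℝ} :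
    pd (fun y => -f y) i x = -pd f i x := by
  unfold pd; rw [fderiv_fun_neg]; rfl

theorem pd_mul {n : ℕ} {f g : (Fin n → ℝ) → ℝ} {i : Fin n} {x : Fin n → ℝ}
    (hf : ContDiff ℝ (⊤:ℕ∞) f) (hg : ContDiff ℝ (⊤:ℕ∞) g) :
    pd (fun y => f y * g y) i x = pd f i x * g x + f x * pd g i x := by
  unfold pd; rw [fderiv_fun_mul (cdAt hf) (cdAt hg)]
  simp only [ContinuousLinearMap.add_apply, ContinuousLinearMap.smul_apply, smul_eq_mul]; ring

theorem pd_const {n : ℕ} {i : Fin n} {x : Fin n → ℝ} (c : ℝ) : pd (fun _ => c) i x = (0:ℝ) := by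
  unfold pd; simp

@[fun_prop]
theorem ContDiff.pdc {n : ℕ} {f : (Fin n → ℝ) → ℝ} (hf : ContDiff ℝ (⊤:ℕ∞) f) (i : Fin n) :
    ContDiff ℝ (⊤:ℕ∞) (fun y => pd f i y) := by
  unfold pd
  exact (hf.fderiv_right (by exact_mod_cast le_top)).clm_apply contDiff_const

theorem pd_pd_comm {n : ℕ} {f : (Fin n → ℝ) → ℝ} {x : Fin n → ℝ} (hf : ContDiff ℝ (⊤:ℕ∞) f)
    (i j : Fin n) :
    pd (pd f i) j x = pd (pd f j) i x := by
  have hD : ContDiff ℝ (⊤:ℕ∞) (fderiv ℝ f) := hf.fderiv_right (by exact_mod_cast le_top)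
  have h1 : ∀ y, HasFDerivAt f (fderiv ℝ f y) y :=
    fun y => (hf.differentiable (by simp) y).hasFDerivAt
  have h2 : HasFDerivAt (fderiv ℝ f) (fderiv ℝ (fderiv ℝ f) x) x :=
    (hD.differentiable (by simp) x).hasFDerivAt
  have hsymm := second_derivative_symmetric h1 h2
  have key : ∀ v w, fderiv ℝ (fun y => fderiv ℝ f y v) x w = fderiv ℝ (fderiv ℝ f) x w v := by
    intro v w
    rw [fderiv_clm_apply ((hD.differentiable (by simp)).differentiableAt)
      (differentiableAt_const v)]
    simp
  have e : ∀ a b : Fin n, pd (pd f a) b x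
      = fderiv ℝ (fderiv ℝ f) x (Pi.single b 1) (Pi.single a 1) := by
    intro a b
    show fderiv ℝ (fun y => fderiv ℝ f y (Pi.single a 1)) x (Pi.single b 1) = _
    rw [key]
  rw [e, e, hsymm]

theorem pd_comp {f : (Fin 2 → ℝ) → ℝ} {φ : (Fin 3 → ℝ) → Fin 2 → ℝ}
    (hf : ContDiff ℝ (⊤:ℕ∞) f) (hφ : ∀ α, ContDiff ℝ (⊤:ℕ∞) fun x => φ x α)
    (i : Fin 3) (x : Fin 3 → ℝ) :
    pd (fun y => f (φ y)) i x = ∑ β, pd f β (φ x) * pd (fun y => φ y β) i x := by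
  have hφd : DifferentiableAt ℝ φ x :=
    (differentiable_pi.2 fun α => (hφ α).differentiable (by simp)).differentiableAt
  have hfd : DifferentiableAt ℝ f (φ x) :=
    (hf.differentiable (by simp)).differentiableAt
  have hcomp : (fun y => f (φ y)) = f ∘ φ := rfl
  unfold pd
  rw [hcomp, fderiv_comp x hfd hφd]
  simp only [ContinuousLinearMap.coe_comp', Function.comp_apply]
  set w := fderiv ℝ φ x (Pi.single i 1) with hw
  have hwβ : ∀ β, w β = fderiv ℝ (fun y => φ y β) x (Pi.single i 1) := by
    intro β
    rw [hw, fderiv_pi (fun α => ((hφ α).differentiable (by simp)).differentiableAt)]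
    rfl
  have hwsum : w = ∑ β : Fin 2, w β • (Pi.single β 1 : Fin 2 → ℝ) := by
    funext j
    simp [Finset.sum_apply, Pi.single_apply, Fin.sum_univ_two]
  rw [hwsum, map_sum]
  refine Finset.sum_congr rfl fun β _ => ?_
  rw [map_smul, hwβ β]
  simp [mul_comm]

/-- The 1-form dual to `U`: row `j`. -/
def thetaf (g : (Fin 3 → ℝ) → Matrix (Fin 3) (Fin 3) ℝ) (U : (Fin 3 → ℝ) → Fin 3 → ℝ)
    (j : Fin 3) : (Fin 3 → ℝ) → ℝ := fun y => ∑ m, g y j m * U y m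

theorem thetaf_def (g : (Fin 3 → ℝ) → Matrix (Fin 3) (Fin 3) ℝ) (U : (Fin 3 → ℝ) → Fin 3 → ℝ)
    (j : Fin 3) : thetaf g U j = fun y => ∑ m, g y j m * U y m := rfl

theorem chris_lower {g : (Fin 3 → ℝ) → Matrix (Fin 3) (Fin 3) ℝ} (hg : IsMetric g)
    (x : Fin 3 → ℝ) (m a b : Fin 3) :
    (∑ k, g x m k * christoffel g k a b x)
      = (1/2) * (pd (fun y => g y m b) a x + pd (fun y => g y m a) b x
          - pd (fun y => g y a b) m x) := by
  have hdet : IsUnit (g x).det := ((hg.2 x).2.det_pos).ne'.isUnit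
  have h1 : g x * (g x)⁻¹ = 1 := Matrix.mul_nonsing_inv _ hdet
  set S : Fin 3 → ℝ := fun l =>
    pd (fun y => g y l b) a x + pd (fun y => g y l a) b x - pd (fun y => g y a b) l x with hS
  have key : Matrix.mulVec (g x) (Matrix.mulVec (g x)⁻¹ S) = S := by
    rw [Matrix.mulVec_mulVec, h1, Matrix.one_mulVec]
  have key2 := congrFun key m
  simp only [Matrix.mulVec, dotProduct, Fin.sum_univ_three] at key2
  unfold christoffel
  simp only [ginv, Fin.sum_univ_three, hS]
  linear_combination (1/2 : ℝ) * key2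

set_option maxHeartbeats 1000000 in
theorem point_kernel
    (g : (Fin 3 → ℝ) → Matrix (Fin 3) (Fin 3) ℝ)
    (h : (Fin 2 → ℝ) → Matrix (Fin 2) (Fin 2) ℝ)
    (φ : (Fin 3 → ℝ) → Fin 2 → ℝ) (lam : (Fin 3 → ℝ) → ℝ)
    (U : (Fin 3 → ℝ) → Fin 3 → ℝ)
    (hg : IsMetric g) (hh : IsMetric h) (hlampos : ∀ x, 0 < lam x)
    (hsc : SemiConformal g h φ lam) (hUvert : Vertical φ U) (hUunit : UnitField g U)
    (x : Fin 3 → ℝ) (V : Fin 3 → ℝ)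
    (hV : ∀ α, (∑ i, pd (fun y => φ y α) i x * V i) = 0) :
    ∀ k, V k = (∑ j, thetaf g U j x * V j) * U x k := by
  have hu0 := hUvert x 0
  have hu1 := hUvert x 1
  simp only [Fin.sum_univ_three] at hu0 hu1
  have hUx := hUunit x
  simp only [Fin.sum_univ_three] at hUx
  have htU : thetaf g U 0 x * U x 0 + thetaf g U 1 x * U x 1 + thetaf g U 2 x * U x 2 = 1 := by
    simp only [thetaf_def, Fin.sum_univ_three]; linear_combination hUx
  set A : Matrix (Fin 3) (Fin 3) ℝ :=
    Matrix.of ![(fun i => pd (fun y => φ y 0) i x), (fun i => pd (fun y => φ y 1) i x),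
      (fun i => thetaf g U i x)] with hA
  have hker : ∀ v : Fin 3 → ℝ, Matrix.mulVec (Matrix.transpose A) v = 0 → v = 0 := by
    intro v hv
    have e0 := congrFun hv 0
    have e1 := congrFun hv 1
    have e2 := congrFun hv 2
    simp [hA, Matrix.mulVec, dotProduct, Fin.sum_univ_three, Matrix.transpose_apply]
      at e0 e1 e2
    have hv2 : v 2 = 0 := by
      linear_combination U x 0 * e0 + U x 1 * e1 + U x 2 * e2 - v 0 * hu0 - v 1 * hu1 - v 2 * htU
    have hs00 := hsc x 0 0
    have hs10 := hsc x 1 0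
    have hs01 := hsc x 0 1
    have hs11 := hsc x 1 1
    have hgit : Matrix.transpose (g x)⁻¹ = (g x)⁻¹ := by
      rw [Matrix.transpose_nonsing_inv, (hg.2 x).1]
    have gi10 : ginv g x 1 0 = ginv g x 0 1 := by
      have := congrFun (congrFun hgit 0) 1; simpa [ginv, Matrix.transpose_apply] using this
    have gi20 : ginv g x 2 0 = ginv g x 0 2 := by
      have := congrFun (congrFun hgit 0) 2; simpa [ginv, Matrix.transpose_apply] using this
    have gi21 : ginv g x 2 1 = ginv g x 1 2 := by
      have := congrFun (congrFun hgit 1) 2; simpa [ginv, Matrix.transpose_apply] using this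
    simp only [Fin.sum_univ_three] at hs00 hs10 hs01 hs11
    simp only [gi10, gi20, gi21] at hs00 hs10 hs01 hs11
    have E0 : v 0 * (lam x ^ 2 * ginv h (φ x) 0 0) + v 1 * (lam x ^ 2 * ginv h (φ x) 1 0) = 0 := by
      linear_combination (ginv g x 0 0 * pd (fun y => φ y 0) 0 x + ginv g x 0 1 * pd (fun y => φ y 0) 1 x + ginv g x 0 2 * pd (fun y => φ y 0) 2 x) * e0
        + (ginv g x 0 1 * pd (fun y => φ y 0) 0 x + ginv g x 1 1 * pd (fun y => φ y 0) 1 x + ginv g x 1 2 * pd (fun y => φ y 0) 2 x) * e1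
        + (ginv g x 0 2 * pd (fun y => φ y 0) 0 x + ginv g x 1 2 * pd (fun y => φ y 0) 1 x + ginv g x 2 2 * pd (fun y => φ y 0) 2 x) * e2
        - v 0 * hs00
        - v 1 * hs10
        - ((ginv g x 0 0 * pd (fun y => φ y 0) 0 x + ginv g x 0 1 * pd (fun y => φ y 0) 1 x + ginv g x 0 2 * pd (fun y => φ y 0) 2 x) * thetaf g U 0 x + (ginv g x 0 1 * pd (fun y => φ y 0) 0 x + ginv g x 1 1 * pd (fun y => φ y 0) 1 x + ginv g x 1 2 * pd (fun y => φ y 0) 2 x) * thetaf g U 1 x + (ginv g x 0 2 * pd (fun y => φ y 0) 0 x + ginv g x 1 2 * pd (fun y => φ y 0) 1 x + ginv g x 2 2 * pd (fun y => φ y 0) 2 x) * thetaf g U 2 x) * hv2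
    have E1 : v 0 * (lam x ^ 2 * ginv h (φ x) 0 1) + v 1 * (lam x ^ 2 * ginv h (φ x) 1 1) = 0 := by
      linear_combination (ginv g x 0 0 * pd (fun y => φ y 1) 0 x + ginv g x 0 1 * pd (fun y => φ y 1) 1 x + ginv g x 0 2 * pd (fun y => φ y 1) 2 x) * e0
        + (ginv g x 0 1 * pd (fun y => φ y 1) 0 x + ginv g x 1 1 * pd (fun y => φ y 1) 1 x + ginv g x 1 2 * pd (fun y => φ y 1) 2 x) * e1
        + (ginv g x 0 2 * pd (fun y => φ y 1) 0 x + ginv g x 1 2 * pd (fun y => φ y 1) 1 x + ginv g x 2 2 * pd (fun y => φ y 1) 2 x) * e2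
        - v 0 * hs01
        - v 1 * hs11
        - ((ginv g x 0 0 * pd (fun y => φ y 1) 0 x + ginv g x 0 1 * pd (fun y => φ y 1) 1 x + ginv g x 0 2 * pd (fun y => φ y 1) 2 x) * thetaf g U 0 x + (ginv g x 0 1 * pd (fun y => φ y 1) 0 x + ginv g x 1 1 * pd (fun y => φ y 1) 1 x + ginv g x 1 2 * pd (fun y => φ y 1) 2 x) * thetaf g U 1 x + (ginv g x 0 2 * pd (fun y => φ y 1) 0 x + ginv g x 1 2 * pd (fun y => φ y 1) 1 x + ginv g x 2 2 * pd (fun y => φ y 1) 2 x) * thetaf g U 2 x) * hv2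
    have hdpos := (hh.2 (φ x)).2.det_pos
    have hdinv : (ginv h (φ x)).det ≠ 0 := by
      have hh1 : (ginv h (φ x)).det = Ring.inverse (h (φ x)).det := by
        simp [ginv, Matrix.det_nonsing_inv]
      rw [hh1, Ring.inverse_eq_inv']
      exact inv_ne_zero hdpos.ne'
    have hdet2 : ginv h (φ x) 0 0 * ginv h (φ x) 1 1 - ginv h (φ x) 0 1 * ginv h (φ x) 1 0 ≠ 0 := by
      rw [← Matrix.det_fin_two]; exact hdinv
    have hlam2 : lam x ^ 2 ≠ 0 := pow_ne_zero _ (hlampos x).ne'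
    have hv0 : v 0 = 0 := by
      have hz : v 0 * (lam x ^ 2 * (ginv h (φ x) 0 0 * ginv h (φ x) 1 1
          - ginv h (φ x) 0 1 * ginv h (φ x) 1 0)) = 0 := by
        linear_combination ginv h (φ x) 1 1 * E0 - ginv h (φ x) 1 0 * E1
      rcases mul_eq_zero.mp hz with h' | h'
      · exact h'
      · exact absurd h' (mul_ne_zero hlam2 hdet2)
    have hv1 : v 1 = 0 := by
      have hz : v 1 * (lam x ^ 2 * (ginv h (φ x) 0 0 * ginv h (φ x) 1 1
          - ginv h (φ x) 0 1 * ginv h (φ x) 1 0)) = 0 := by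
        linear_combination ginv h (φ x) 0 0 * E1 - ginv h (φ x) 0 1 * E0
      rcases mul_eq_zero.mp hz with h' | h'
      · exact h'
      · exact absurd h' (mul_ne_zero hlam2 hdet2)
    funext r
    fin_cases r
    · simpa using hv0
    · simpa using hv1
    · simpa using hv2
  have hdetA : A.det ≠ 0 := by
    intro hd
    have hdT : (Matrix.transpose A).det = 0 := by rw [Matrix.det_transpose]; exact hd
    obtain ⟨v, hvne, hveq⟩ := Matrix.exists_mulVec_eq_zero_iff.mpr hdT
    exact hvne (hker v hveq)
  set c := ∑ j, thetaf g U j x * V j with hc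
  have hce : c = thetaf g U 0 x * V 0 + thetaf g U 1 x * V 1 + thetaf g U 2 x * V 2 := by
    rw [hc]; simp [Fin.sum_univ_three]
  have hV0 := hV 0
  have hV1 := hV 1
  simp only [Fin.sum_univ_three] at hV0 hV1
  have hAW : Matrix.mulVec A (fun i => V i - c * U x i) = 0 := by
    funext r
    fin_cases r
    · simp [hA, Matrix.mulVec, dotProduct, Fin.sum_univ_three]
      linear_combination hV0 - c * hu0
    · simp [hA, Matrix.mulVec, dotProduct, Fin.sum_univ_three]
      linear_combination hV1 - c * hu1
    · simp [hA, Matrix.mulVec, dotProduct, Fin.sum_univ_three]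
      linear_combination -hce - c * htU
  have hW : (fun i => V i - c * U x i) = 0 := by
    by_contra hne
    exact hdetA (Matrix.exists_mulVec_eq_zero_iff.mp ⟨_, hne, hAW⟩)
  intro k
  have hk := congrFun hW k
  simp only [Pi.zero_apply] at hk
  linarith [hk]

set_option maxHeartbeats 1000000 in
theorem bracket_vertical
    (φ : (Fin 3 → ℝ) → Fin 2 → ℝ) (Xb : (Fin 2 → ℝ) → Fin 2 → ℝ)
    (U X : (Fin 3 → ℝ) → Fin 3 → ℝ)
    (hφ : ∀ α, ContDiff ℝ (⊤ : ℕ∞) fun x => φ x α)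
    (hXb : ∀ α, ContDiff ℝ (⊤ : ℕ∞) fun y => Xb y α)
    (hU : SmoothVF U) (hX : SmoothVF X)
    (hUvert : Vertical φ U)
    (hlift : ∀ x α, (∑ i, pd (fun y => φ y α) i x * X x i) = Xb (φ x) α)
    (x : Fin 3 → ℝ) (α : Fin 2) :
    (∑ i, pd (fun y => φ y α) i x * bracket U X x i) = 0 := by
  have hU' : ∀ k, ContDiff ℝ (⊤:ℕ∞) fun y => U y k := hU
  have hX' : ∀ k, ContDiff ℝ (⊤:ℕ∞) fun y => X y k := hX
  have hLfun : (fun w => ∑ i, pd (fun y => φ y α) i w * X w i) = fun w => Xb (φ w) α :=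
    funext fun w => hlift w α
  have hVfun : (fun w => ∑ i, pd (fun y => φ y α) i w * U w i) = fun _ => (0:ℝ) :=
    funext fun w => hUvert w α
  have hL : ∀ m, pd (fun w => ∑ i, pd (fun y => φ y α) i w * X w i) m x
      = pd (fun w => Xb (φ w) α) m x := fun m => by rw [hLfun]
  have hVd : ∀ m, pd (fun w => ∑ i, pd (fun y => φ y α) i w * U w i) m x = 0 := fun m => by
    rw [hVfun]; exact pd_const 0
  have hR : ∀ m, pd (fun w => Xb (φ w) α) m x
      = ∑ β, pd (fun y => Xb y α) β (φ x) * pd (fun y => φ y β) m x :=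
    fun m => pd_comp (hXb α) hφ m x
  have hL0 := hL 0
  have hL1 := hL 1
  have hL2 := hL 2
  have hV0 := hVd 0
  have hV1 := hVd 1
  have hV2 := hVd 2
  simp (disch := fun_prop) only [Fin.sum_univ_three, pd_add, pd_mul]
    at hL0 hL1 hL2 hV0 hV1 hV2
  have hR0 := hR 0
  have hR1 := hR 1
  have hR2 := hR 2
  simp only [Fin.sum_univ_two] at hR0 hR1 hR2
  have S01 := pd_pd_comm (x := x) (hφ α) 1 0
  have S02 := pd_pd_comm (x := x) (hφ α) 2 0
  have S12 := pd_pd_comm (x := x) (hφ α) 2 1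
  have hu0 := hUvert x 0
  have hu1 := hUvert x 1
  simp only [Fin.sum_univ_three] at hu0 hu1
  simp only [bracket, Fin.sum_univ_three]
  linear_combination
    U x 0 * hL0 + U x 1 * hL1 + U x 2 * hL2
    + U x 0 * hR0 + U x 1 * hR1 + U x 2 * hR2
    - X x 0 * hV0 - X x 1 * hV1 - X x 2 * hV2
    + pd (fun y => Xb y α) 0 (φ x) * hu0 + pd (fun y => Xb y α) 1 (φ x) * hu1
    + (U x 1 * X x 0 - U x 0 * X x 1) * S01
    + (U x 2 * X x 0 - U x 0 * X x 2) * S02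
    + (U x 2 * X x 1 - U x 1 * X x 2) * S12

set_option maxHeartbeats 1000000 in
theorem hmu_lemma
    (g : (Fin 3 → ℝ) → Matrix (Fin 3) (Fin 3) ℝ) (U : (Fin 3 → ℝ) → Fin 3 → ℝ)
    (hg : IsMetric g) (hU : SmoothVF U) (hUunit : UnitField g U) (j : Fin 3) :
    (fun y => flat g (meanCurv g U) j y)
      = fun y => ∑ k, U y k * (pd (thetaf g U j) k y - pd (thetaf g U k) j y) := by
  have hg1 : ∀ a b, ContDiff ℝ (⊤:ℕ∞) fun y => g y a b := hg.1
  have hU' : ∀ k, ContDiff ℝ (⊤:ℕ∞) fun y => U y k := hU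
  funext y
  have g10 : g y 1 0 = g y 0 1 := (hg.2 y).1.apply 0 1
  have g20 : g y 2 0 = g y 0 2 := (hg.2 y).1.apply 0 2
  have g21 : g y 2 1 = g y 1 2 := (hg.2 y).1.apply 1 2
  have honef : (fun z => ∑ a, ∑ b, g z a b * U z a * U z b) = fun _ => (1:ℝ) :=
    funext fun z => hUunit z
  have hDu : pd (fun z => ∑ a, ∑ b, g z a b * U z a * U z b) j y = 0 := by
    rw [honef]; exact pd_const 1
  simp (disch := fun_prop) only [Fin.sum_univ_three, pd_add, pd_mul] at hDu
  try simp only [g10, g20, g21] at hDu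
  have hcl := fun a b => chris_lower hg y j a b
  simp only [Fin.sum_univ_three] at hcl
  simp only [flat, meanCurv, covD, thetaf_def]
  simp (disch := fun_prop) only [Fin.sum_univ_three, pd_add, pd_sub, pd_mul]
  try simp only [g10, g20, g21]
  linear_combination
      (U y 0 * U y 0) * hcl 0 0
      + (U y 0 * U y 1) * hcl 0 1
      + (U y 0 * U y 2) * hcl 0 2
      + (U y 1 * U y 0) * hcl 1 0
      + (U y 1 * U y 1) * hcl 1 1
      + (U y 1 * U y 2) * hcl 1 2
      + (U y 2 * U y 0) * hcl 2 0
      + (U y 2 * U y 1) * hcl 2 1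
      + (U y 2 * U y 2) * hcl 2 2
      + (1/2 : ℝ) * hDu

set_option maxHeartbeats 1000000 in
theorem hFeq_lemma
    (g : (Fin 3 → ℝ) → Matrix (Fin 3) (Fin 3) ℝ) (U X₁ X₂ : (Fin 3 → ℝ) → Fin 3 → ℝ)
    (hg : IsMetric g) (hU : SmoothVF U) (hX₁ : SmoothVF X₁) (hX₂ : SmoothVF X₂)
    (hhor₁ : ∀ x, (∑ i, ∑ j, g x i j * X₁ x i * U x j) = 0)
    (hhor₂ : ∀ x, (∑ i, ∑ j, g x i j * X₂ x i * U x j) = 0) :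
    (fun y => ∑ i, ∑ j, g y i j * U y i * bracket X₁ X₂ y j)
      = fun y => -(∑ i, ∑ j, X₁ y i * X₂ y j *
          (pd (thetaf g U j) i y - pd (thetaf g U i) j y)) := by
  have hg1 : ∀ a b, ContDiff ℝ (⊤:ℕ∞) fun y => g y a b := hg.1
  have hU' : ∀ k, ContDiff ℝ (⊤:ℕ∞) fun y => U y k := hU
  have hX1' : ∀ k, ContDiff ℝ (⊤:ℕ∞) fun y => X₁ y k := hX₁
  have hX2' : ∀ k, ContDiff ℝ (⊤:ℕ∞) fun y => X₂ y k := hX₂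
  funext y
  have g10 : g y 1 0 = g y 0 1 := (hg.2 y).1.apply 0 1
  have g20 : g y 2 0 = g y 0 2 := (hg.2 y).1.apply 0 2
  have g21 : g y 2 1 = g y 1 2 := (hg.2 y).1.apply 1 2
  have hZ1 : (fun z => ∑ a, thetaf g U a z * X₁ z a) = fun _ => (0:ℝ) := by
    funext z
    have hh := hhor₁ z
    simp only [Fin.sum_univ_three] at hh
    simp only [thetaf_def, Fin.sum_univ_three]
    linear_combination hh
  have hZ2 : (fun z => ∑ a, thetaf g U a z * X₂ z a) = fun _ => (0:ℝ) := by
    funext z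
    have hh := hhor₂ z
    simp only [Fin.sum_univ_three] at hh
    simp only [thetaf_def, Fin.sum_univ_three]
    linear_combination hh
  have hDA1 : ∀ k, pd (fun z => ∑ a, thetaf g U a z * X₁ z a) k y = 0 := fun k => by
    rw [hZ1]; exact pd_const 0
  have hDA2 : ∀ k, pd (fun z => ∑ a, thetaf g U a z * X₂ z a) k y = 0 := fun k => by
    rw [hZ2]; exact pd_const 0
  simp (disch := fun_prop) only [thetaf_def, Fin.sum_univ_three, pd_add, pd_mul] at hDA1 hDA2
  try simp only [g10, g20, g21] at hDA1 hDA2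
  simp only [bracket, thetaf_def, Fin.sum_univ_three]
  simp (disch := fun_prop) only [Fin.sum_univ_three, pd_add, pd_sub, pd_mul, pd_neg]
  try simp only [g10, g20, g21]
  linear_combination (X₁ y 0) * hDA2 0 + (X₁ y 1) * hDA2 1 + (X₁ y 2) * hDA2 2 - (X₂ y 0) * hDA1 0 - (X₂ y 1) * hDA1 1 - (X₂ y 2) * hDA1 2

end AuxLemmas
/-- If `X₁, X₂` are horizontal lifts of unit vector fields `X̄₁, X̄₂` on `N`,
then (i) `H[U, X_a] = 0`, and (ii) `U(g(U,[X₁,X₂])) = −dμ♭(X₁,X₂)`. -/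
theorem horizontal_lift_bracket_lemma
    (g : (Fin 3 → ℝ) → Matrix (Fin 3) (Fin 3) ℝ)
    (h : (Fin 2 → ℝ) → Matrix (Fin 2) (Fin 2) ℝ)
    (φ : (Fin 3 → ℝ) → Fin 2 → ℝ) (lam : (Fin 3 → ℝ) → ℝ)
    (U X₁ X₂ : (Fin 3 → ℝ) → Fin 3 → ℝ)
    (Xb₁ Xb₂ : (Fin 2 → ℝ) → Fin 2 → ℝ)
    (hg : IsMetric g) (hh : IsMetric h)
    (hφ : ∀ α, ContDiff ℝ (⊤ : ℕ∞) fun x => φ x α)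
    (hlam : ContDiff ℝ (⊤ : ℕ∞) lam) (hlampos : ∀ x, 0 < lam x)
    (hsc : SemiConformal g h φ lam)
    (hU : SmoothVF U) (hUvert : Vertical φ U) (hUunit : UnitField g U)
    (hX₁ : SmoothVF X₁) (hX₂ : SmoothVF X₂)
    (hXb₁ : ∀ α, ContDiff ℝ (⊤ : ℕ∞) fun y => Xb₁ y α)
    (hXb₂ : ∀ α, ContDiff ℝ (⊤ : ℕ∞) fun y => Xb₂ y α)
    -- `X̄₁, X̄₂` are unit vector fields on `N`
    (hunit₁ : ∀ y, (∑ α, ∑ β, h y α β * Xb₁ y α * Xb₁ y β) = 1)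
    (hunit₂ : ∀ y, (∑ α, ∑ β, h y α β * Xb₂ y α * Xb₂ y β) = 1)
    -- `X₁, X₂` are the horizontal lifts: `dφ(X_a) = X̄_a ∘ φ` and `X_a ⊥ ker dφ`
    (hlift₁ : ∀ x α, (∑ i, pd (fun y => φ y α) i x * X₁ x i) = Xb₁ (φ x) α)
    (hlift₂ : ∀ x α, (∑ i, pd (fun y => φ y α) i x * X₂ x i) = Xb₂ (φ x) α)
    (hhor₁ : ∀ x, (∑ i, ∑ j, g x i j * X₁ x i * U x j) = 0)
    (hhor₂ : ∀ x, (∑ i, ∑ j, g x i j * X₂ x i * U x j) = 0) :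
    (∀ x k, Hproj g U (bracket U X₁) x k = 0) ∧
    (∀ x k, Hproj g U (bracket U X₂) x k = 0) ∧
    (∀ x, (∑ k, U x k *
        pd (fun y => ∑ i, ∑ j, g y i j * U y i * bracket X₁ X₂ y j) k x) =
      -(∑ i, ∑ j, X₁ x i * X₂ x j *
          (pd (fun y => flat g (meanCurv g U) j y) i x
            - pd (fun y => flat g (meanCurv g U) i y) j x))) := by
  have hg1 : ∀ a b, ContDiff ℝ (⊤:ℕ∞) fun y => g y a b := hg.1
  have hU' : ∀ k, ContDiff ℝ (⊤:ℕ∞) fun y => U y k := hU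
  have hX1' : ∀ k, ContDiff ℝ (⊤:ℕ∞) fun y => X₁ y k := hX₁
  have hX2' : ∀ k, ContDiff ℝ (⊤:ℕ∞) fun y => X₂ y k := hX₂
  have hθc : ∀ j, ContDiff ℝ (⊤:ℕ∞) (thetaf g U j) := fun j => by
    unfold thetaf; simp only [Fin.sum_univ_three]; fun_prop
  have hBd1 : ∀ x k, bracket U X₁ x k = (∑ j, thetaf g U j x * bracket U X₁ x j) * U x k :=
    fun x k => point_kernel g h φ lam U hg hh hlampos hsc hUvert hUunit x
      (fun i => bracket U X₁ x i)
      (fun α => bracket_vertical φ Xb₁ U X₁ hφ hXb₁ hU hX₁ hUvert hlift₁ x α) k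
  have hBd2 : ∀ x k, bracket U X₂ x k = (∑ j, thetaf g U j x * bracket U X₂ x j) * U x k :=
    fun x k => point_kernel g h φ lam U hg hh hlampos hsc hUvert hUunit x
      (fun i => bracket U X₂ x i)
      (fun α => bracket_vertical φ Xb₂ U X₂ hφ hXb₂ hU hX₂ hUvert hlift₂ x α) k
  refine ⟨?_, ?_, ?_⟩
  · intro x k
    have hUx := hUunit x
    simp only [Fin.sum_univ_three] at hUx
    have hBk := hBd1 x k
    have hB10 := hBd1 x 0
    have hB11 := hBd1 x 1
    have hB12 := hBd1 x 2
    simp only [bracket, Fin.sum_univ_three] at hBk hB10 hB11 hB12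
    simp only [Hproj, bracket, Fin.sum_univ_three]
    linear_combination
      hBk
      - ((g x 0 0 * U x 0 + g x 0 1 * U x 1 + g x 0 2 * U x 2) * U x k) * hB10
      - ((g x 1 0 * U x 0 + g x 1 1 * U x 1 + g x 1 2 * U x 2) * U x k) * hB11
      - ((g x 2 0 * U x 0 + g x 2 1 * U x 1 + g x 2 2 * U x 2) * U x k) * hB12
      - ((thetaf g U 0 x * ((U x 0 * pd (fun y => X₁ y 0) 0 x - X₁ x 0 * pd (fun y => U y 0) 0 x) + (U x 1 * pd (fun y => X₁ y 0) 1 x - X₁ x 1 * pd (fun y => U y 0) 1 x) + (U x 2 * pd (fun y => X₁ y 0) 2 x - X₁ x 2 * pd (fun y => U y 0) 2 x)) + thetaf g U 1 x * ((U x 0 * pd (fun y => X₁ y 1) 0 x - X₁ x 0 * pd (fun y => U y 1) 0 x) + (U x 1 * pd (fun y => X₁ y 1) 1 x - X₁ x 1 * pd (fun y => U y 1) 1 x) + (U x 2 * pd (fun y => X₁ y 1) 2 x - X₁ x 2 * pd (fun y => U y 1) 2 x)) + thetaf g U 2 x * ((U x 0 * pd (fun y => X₁ y 2) 0 x - X₁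 x 0 * pd (fun y => U y 2) 0 x) + (U x 1 * pd (fun y => X₁ y 2) 1 x - X₁ x 1 * pd (fun y => U y 2) 1 x) + (U x 2 * pd (fun y => X₁ y 2) 2 x - X₁ x 2 * pd (fun y => U y 2) 2 x))) * U x k) * hUx
  · intro x k
    have hUx := hUunit x
    simp only [Fin.sum_univ_three] at hUx
    have hBk := hBd2 x k
    have hB20 := hBd2 x 0
    have hB21 := hBd2 x 1
    have hB22 := hBd2 x 2
    simp only [bracket, Fin.sum_univ_three] at hBk hB20 hB21 hB22
    simp only [Hproj, bracket, Fin.sum_univ_three]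
    linear_combination
      hBk
      - ((g x 0 0 * U x 0 + g x 0 1 * U x 1 + g x 0 2 * U x 2) * U x k) * hB20
      - ((g x 1 0 * U x 0 + g x 1 1 * U x 1 + g x 1 2 * U x 2) * U x k) * hB21
      - ((g x 2 0 * U x 0 + g x 2 1 * U x 1 + g x 2 2 * U x 2) * U x k) * hB22
      - ((thetaf g U 0 x * ((U x 0 * pd (fun y => X₂ y 0) 0 x - X₂ x 0 * pd (fun y => U y 0) 0 x) + (U x 1 * pd (fun y => X₂ y 0) 1 x - X₂ x 1 * pd (fun y => U y 0) 1 x) + (U x 2 * pd (fun y => X₂ y 0) 2 x - X₂ x 2 * pd (fun y => U y 0) 2 x)) + thetaf g U 1 x * ((U x 0 * pd (fun y => X₂ y 1) 0 x - X₂ x 0 * pd (fun y => U y 1) 0 x) + (U x 1 * pd (fun y => X₂ y 1) 1 x - X₂ x 1 * pd (fun y => U y 1) 1 x) + (U x 2 * pd (fun y => X₂ y 1) 2 x - X₂ x 2 * pd (fun y => U y 1) 2 x)) + thetaf g U 2 x * ((U x 0 * pd (fun y => X₂ y 2) 0 x - X₂ x 0 * pd (fun y => U y 2) 0 x) + (U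 x 1 * pd (fun y => X₂ y 2) 1 x - X₂ x 1 * pd (fun y => U y 2) 1 x) + (U x 2 * pd (fun y => X₂ y 2) 2 x - X₂ x 2 * pd (fun y => U y 2) 2 x))) * U x k) * hUx
  · intro x
    rw [hFeq_lemma g U X₁ X₂ hg hU hX₁ hX₂ hhor₁ hhor₂]
    have hmu := hmu_lemma g U hg hU hUunit
    simp only [hmu]
    -- hypotheses at x
    have hB10 := hBd1 x 0
    have hB11 := hBd1 x 1
    have hB12 := hBd1 x 2
    have hB20 := hBd2 x 0
    have hB21 := hBd2 x 1
    have hB22 := hBd2 x 2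
    simp only [bracket, Fin.sum_univ_three] at hB10 hB11 hB12 hB20 hB21 hB22
    have hZ1 : (fun z => ∑ a, thetaf g U a z * X₁ z a) = fun _ => (0:ℝ) := by
      funext z
      have hh := hhor₁ z
      simp only [Fin.sum_univ_three] at hh
      simp only [thetaf_def, Fin.sum_univ_three]
      linear_combination hh
    have hZ2 : (fun z => ∑ a, thetaf g U a z * X₂ z a) = fun _ => (0:ℝ) := by
      funext z
      have hh := hhor₂ z
      simp only [Fin.sum_univ_three] at hh
      simp only [thetaf_def, Fin.sum_univ_three]
      linear_combination hh
    have hOne : (fun z => ∑ a, thetaf g U a z * U z a) = fun _ => (1:ℝ) := by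
      funext z
      have hh := hUunit z
      simp only [Fin.sum_univ_three] at hh
      simp only [thetaf_def, Fin.sum_univ_three]
      linear_combination hh
    have DA10 : pd (fun z => ∑ a, thetaf g U a z * X₁ z a) 0 x = 0 := by
      rw [hZ1]; exact pd_const 0
    have DA11 : pd (fun z => ∑ a, thetaf g U a z * X₁ z a) 1 x = 0 := by
      rw [hZ1]; exact pd_const 0
    have DA12 : pd (fun z => ∑ a, thetaf g U a z * X₁ z a) 2 x = 0 := by
      rw [hZ1]; exact pd_const 0
    have DA20 : pd (fun z => ∑ a, thetaf g U a z * X₂ z a) 0 x = 0 := by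
      rw [hZ2]; exact pd_const 0
    have DA21 : pd (fun z => ∑ a, thetaf g U a z * X₂ z a) 1 x = 0 := by
      rw [hZ2]; exact pd_const 0
    have DA22 : pd (fun z => ∑ a, thetaf g U a z * X₂ z a) 2 x = 0 := by
      rw [hZ2]; exact pd_const 0
    have DTu0 : pd (fun z => ∑ a, thetaf g U a z * U z a) 0 x = 0 := by
      rw [hOne]; exact pd_const 1
    have DTu1 : pd (fun z => ∑ a, thetaf g U a z * U z a) 1 x = 0 := by
      rw [hOne]; exact pd_const 1
    have DTu2 : pd (fun z => ∑ a, thetaf g U a z * U z a) 2 x = 0 := by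
      rw [hOne]; exact pd_const 1
    simp (disch := fun_prop) only [Fin.sum_univ_three, pd_add, pd_mul]
      at DA10 DA11 DA12 DA20 DA21 DA22 DTu0 DTu1 DTu2
    have Sdd0a := pd_pd_comm (x := x) (hθc 0) 1 0
    have Sdd0b := pd_pd_comm (x := x) (hθc 0) 2 0
    have Sdd0c := pd_pd_comm (x := x) (hθc 0) 2 1
    have Sdd1a := pd_pd_comm (x := x) (hθc 1) 1 0
    have Sdd1b := pd_pd_comm (x := x) (hθc 1) 2 0
    have Sdd1c := pd_pd_comm (x := x) (hθc 1) 2 1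
    have Sdd2a := pd_pd_comm (x := x) (hθc 2) 1 0
    have Sdd2b := pd_pd_comm (x := x) (hθc 2) 2 0
    have Sdd2c := pd_pd_comm (x := x) (hθc 2) 2 1
    simp (disch := fun_prop) only [Fin.sum_univ_three, pd_neg, pd_add, pd_sub, pd_mul]
    simp only [Sdd0a, Sdd0b, Sdd0c, Sdd1a, Sdd1b, Sdd1c, Sdd2a, Sdd2b, Sdd2c]
    linear_combination
      (-((pd (thetaf g U 0) 0 x - pd (thetaf g U 0) 0 x) * X₂ x 0 + (pd (thetaf g U 1) 0 x - pd (thetaf g U 0) 1 x) * X₂ x 1 + (pd (thetaf g U 2) 0 x - pd (thetaf g U 0) 2 x) * X₂ x 2)) * hB10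
      + (-((pd (thetaf g U 0) 1 x - pd (thetaf g U 1) 0 x) * X₂ x 0 + (pd (thetaf g U 1) 1 x - pd (thetaf g U 1) 1 x) * X₂ x 1 + (pd (thetaf g U 2) 1 x - pd (thetaf g U 1) 2 x) * X₂ x 2)) * hB11
      + (-((pd (thetaf g U 0) 2 x - pd (thetaf g U 2) 0 x) * X₂ x 0 + (pd (thetaf g U 1) 2 x - pd (thetaf g U 2) 1 x) * X₂ x 1 + (pd (thetaf g U 2) 2 x - pd (thetaf g U 2) 2 x) * X₂ x 2)) * hB12
      + (-((pd (thetaf g U 0) 0 x - pd (thetaf g U 0) 0 x) * X₁ x 0 + (pd (thetaf g U 0) 1 x - pd (thetaf g U 1) 0 x) * X₁ x 1 + (pd (thetaf g U 0) 2 x - pd (thetaf g U 2) 0 x) * X₁ x 2)) * hB20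
      + (-((pd (thetaf g U 1) 0 x - pd (thetaf g U 0) 1 x) * X₁ x 0 + (pd (thetaf g U 1) 1 x - pd (thetaf g U 1) 1 x) * X₁ x 1 + (pd (thetaf g U 1) 2 x - pd (thetaf g U 2) 1 x) * X₁ x 2)) * hB21
      + (-((pd (thetaf g U 2) 0 x - pd (thetaf g U 0) 2 x) * X₁ x 0 + (pd (thetaf g U 2) 1 x - pd (thetaf g U 1) 2 x) * X₁ x 1 + (pd (thetaf g U 2) 2 x - pd (thetaf g U 2) 2 x) * X₁ x 2)) * hB22
      + (-(thetaf g U 0 x * ((U x 0 * pd (fun y => X₁ y 0) 0 x - X₁ x 0 * pd (fun y => U y 0) 0 x) + (U x 1 * pd (fun y => X₁ y 0) 1 x - X₁ x 1 * pd (fun y => U y 0) 1 x) + (U x 2 * pd (fun y => X₁ y 0) 2 x - X₁ x 2 * pd (fun y => U y 0) 2 x)) + thetaf g U 1 x * ((U x 0 * pd (fun y => X₁ y 1) 0 x - X₁ x 0 * pd (fun y => U y 1) 0 x) + (U x 1 * pd (fun y => X₁ y 1) 1 x - X₁ x 1 * pd (fun y => U y 1) 1 x) + (U x 2 * pd (fun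 y => X₁ y 1) 2 x - X₁ x 2 * pd (fun y => U y 1) 2 x)) + thetaf g U 2 x * ((U x 0 * pd (fun y => X₁ y 2) 0 x - X₁ x 0 * pd (fun y => U y 2) 0 x) + (U x 1 * pd (fun y => X₁ y 2) 1 x - X₁ x 1 * pd (fun y => U y 2) 1 x) + (U x 2 * pd (fun y => X₁ y 2) 2 x - X₁ x 2 * pd (fun y => U y 2) 2 x))) * U x 0) * DA20
      + (-(thetaf g U 0 x * ((U x 0 * pd (fun y => X₁ y 0) 0 x - X₁ x 0 * pd (fun y => U y 0) 0 x) + (U x 1 * pd (fun y => X₁ y 0) 1 x - X₁ x 1 * pd (fun y => U y 0) 1 x) + (U x 2 * pd (fun y => X₁ y 0) 2 x - X₁ x 2 * pd (fun y => U y 0) 2 x)) + thetaf g U 1 x * ((U x 0 * pd (fun y => X₁ y 1) 0 x - X₁ x 0 * pd (fun y => U y 1) 0 x) + (U x 1 * pd (fun y => X₁ y 1) 1 x - X₁ x 1 * pd (fun y => U y 1) 1 x) + (U x 2 * pd (fun y => X₁ y 1) 2 x - X₁ x 2 * pd (fun y => U y 1) 2 x)) + thetaf g U 2 x * ((U x 0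 * pd (fun y => X₁ y 2) 0 x - X₁ x 0 * pd (fun y => U y 2) 0 x) + (U x 1 * pd (fun y => X₁ y 2) 1 x - X₁ x 1 * pd (fun y => U y 2) 1 x) + (U x 2 * pd (fun y => X₁ y 2) 2 x - X₁ x 2 * pd (fun y => U y 2) 2 x))) * U x 1) * DA21
      + (-(thetaf g U 0 x * ((U x 0 * pd (fun y => X₁ y 0) 0 x - X₁ x 0 * pd (fun y => U y 0) 0 x) + (U x 1 * pd (fun y => X₁ y 0) 1 x - X₁ x 1 * pd (fun y => U y 0) 1 x) + (U x 2 * pd (fun y => X₁ y 0) 2 x - X₁ x 2 * pd (fun y => U y 0) 2 x)) + thetaf g U 1 x * ((U x 0 * pd (fun y => X₁ y 1) 0 x - X₁ x 0 * pd (fun y => U y 1) 0 x) + (U x 1 * pd (fun y => X₁ y 1) 1 x - X₁ x 1 * pd (fun y => U y 1) 1 x) + (U x 2 * pd (fun y => X₁ y 1) 2 x - X₁ x 2 * pd (fun y => U y 1) 2 x)) + thetaf g U 2 x * ((U x 0 * pd (fun y => X₁ y 2) 0 x - X₁ x 0 * pd (fun y => U y 2) 0 x) + (U x 1 * pd (fun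 y => X₁ y 2) 1 x - X₁ x 1 * pd (fun y => U y 2) 1 x) + (U x 2 * pd (fun y => X₁ y 2) 2 x - X₁ x 2 * pd (fun y => U y 2) 2 x))) * U x 2) * DA22
      + ((thetaf g U 0 x * ((U x 0 * pd (fun y => X₁ y 0) 0 x - X₁ x 0 * pd (fun y => U y 0) 0 x) + (U x 1 * pd (fun y => X₁ y 0) 1 x - X₁ x 1 * pd (fun y => U y 0) 1 x) + (U x 2 * pd (fun y => X₁ y 0) 2 x - X₁ x 2 * pd (fun y => U y 0) 2 x)) + thetaf g U 1 x * ((U x 0 * pd (fun y => X₁ y 1) 0 x - X₁ x 0 * pd (fun y => U y 1) 0 x) + (U x 1 * pd (fun y => X₁ y 1) 1 x - X₁ x 1 * pd (fun y => U y 1) 1 x) + (U x 2 * pd (fun y => X₁ y 1) 2 x - X₁ x 2 * pd (fun y => U y 1) 2 x)) + thetaf g U 2 x * ((U x 0 * pd (fun y => X₁ y 2) 0 x - X₁ x 0 * pd (fun y => U y 2) 0 x) + (U x 1 * pd (fun y => X₁ y 2) 1 x - X₁ x 1 * pd (fun y => U y 2) 1 x) + (U x 2 * pd (fun y => X₁ y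 2) 2 x - X₁ x 2 * pd (fun y => U y 2) 2 x))) * X₂ x 0) * DTu0
      + ((thetaf g U 0 x * ((U x 0 * pd (fun y => X₁ y 0) 0 x - X₁ x 0 * pd (fun y => U y 0) 0 x) + (U x 1 * pd (fun y => X₁ y 0) 1 x - X₁ x 1 * pd (fun y => U y 0) 1 x) + (U x 2 * pd (fun y => X₁ y 0) 2 x - X₁ x 2 * pd (fun y => U y 0) 2 x)) + thetaf g U 1 x * ((U x 0 * pd (fun y => X₁ y 1) 0 x - X₁ x 0 * pd (fun y => U y 1) 0 x) + (U x 1 * pd (fun y => X₁ y 1) 1 x - X₁ x 1 * pd (fun y => U y 1) 1 x) + (U x 2 * pd (fun y => X₁ y 1) 2 x - X₁ x 2 * pd (fun y => U y 1) 2 x)) + thetaf g U 2 x * ((U x 0 * pd (fun y => X₁ y 2) 0 x - X₁ x 0 * pd (fun y => U y 2) 0 x) + (U x 1 * pd (fun y => X₁ y 2) 1 x - X₁ x 1 * pd (fun y => U y 2) 1 x) + (U x 2 * pd (fun y => X₁ y 2) 2 x - X₁ x 2 * pd (fun y => U y 2) 2 x))) * X₂ x 1) * DTu1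
      + ((thetaf g U 0 x * ((U x 0 * pd (fun y => X₁ y 0) 0 x - X₁ x 0 * pd (fun y => U y 0) 0 x) + (U x 1 * pd (fun y => X₁ y 0) 1 x - X₁ x 1 * pd (fun y => U y 0) 1 x) + (U x 2 * pd (fun y => X₁ y 0) 2 x - X₁ x 2 * pd (fun y => U y 0) 2 x)) + thetaf g U 1 x * ((U x 0 * pd (fun y => X₁ y 1) 0 x - X₁ x 0 * pd (fun y => U y 1) 0 x) + (U x 1 * pd (fun y => X₁ y 1) 1 x - X₁ x 1 * pd (fun y => U y 1) 1 x) + (U x 2 * pd (fun y => X₁ y 1) 2 x - X₁ x 2 * pd (fun y => U y 1) 2 x)) + thetaf g U 2 x * ((U x 0 * pd (fun y => X₁ y 2) 0 x - X₁ x 0 * pd (fun y => U y 2) 0 x) + (U x 1 * pd (fun y => X₁ y 2) 1 x - X₁ x 1 * pd (fun y => U y 2) 1 x) + (U x 2 * pd (fun y => X₁ y 2) 2 x - X₁ x 2 * pd (fun y => U y 2) 2 x))) * X₂ x 2) * DTu2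
      + ((thetaf g U 0 x * ((U x 0 * pd (fun y => X₂ y 0) 0 x - X₂ x 0 * pd (fun y => U y 0) 0 x) + (U x 1 * pd (fun y => X₂ y 0) 1 x - X₂ x 1 * pd (fun y => U y 0) 1 x) + (U x 2 * pd (fun y => X₂ y 0) 2 x - X₂ x 2 * pd (fun y => U y 0) 2 x)) + thetaf g U 1 x * ((U x 0 * pd (fun y => X₂ y 1) 0 x - X₂ x 0 * pd (fun y => U y 1) 0 x) + (U x 1 * pd (fun y => X₂ y 1) 1 x - X₂ x 1 * pd (fun y => U y 1) 1 x) + (U x 2 * pd (fun y => X₂ y 1) 2 x - X₂ x 2 * pd (fun y => U y 1) 2 x)) + thetaf g U 2 x * ((U x 0 * pd (fun y => X₂ y 2) 0 x - X₂ x 0 * pd (fun y => U y 2) 0 x) + (U x 1 * pd (fun y => X₂ y 2) 1 x - X₂ x 1 * pd (fun y => U y 2) 1 x) + (U x 2 * pd (fun y => X₂ y 2) 2 x - X₂ x 2 * pd (fun y => U y 2) 2 x))) * U x 0) * DA10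
      + ((thetaf g U 0 x * ((U x 0 * pd (fun y => X₂ y 0) 0 x - X₂ x 0 * pd (fun y => U y 0) 0 x) + (U x 1 * pd (fun y => X₂ y 0) 1 x - X₂ x 1 * pd (fun y => U y 0) 1 x) + (U x 2 * pd (fun y => X₂ y 0) 2 x - X₂ x 2 * pd (fun y => U y 0) 2 x)) + thetaf g U 1 x * ((U x 0 * pd (fun y => X₂ y 1) 0 x - X₂ x 0 * pd (fun y => U y 1) 0 x) + (U x 1 * pd (fun y => X₂ y 1) 1 x - X₂ x 1 * pd (fun y => U y 1) 1 x) + (U x 2 * pd (fun y => X₂ y 1) 2 x - X₂ x 2 * pd (fun y => U y 1) 2 x)) + thetaf g U 2 x * ((U x 0 * pd (fun y => X₂ y 2) 0 x - X₂ x 0 * pd (fun y => U y 2) 0 x) + (U x 1 * pd (fun y => X₂ y 2) 1 x - X₂ x 1 * pd (fun y => U y 2) 1 x) + (U x 2 * pd (fun y => X₂ y 2) 2 x - X₂ x 2 * pd (fun y => U y 2) 2 x))) * U x 1) * DA11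
      + ((thetaf g U 0 x * ((U x 0 * pd (fun y => X₂ y 0) 0 x - X₂ x 0 * pd (fun y => U y 0) 0 x) + (U x 1 * pd (fun y => X₂ y 0) 1 x - X₂ x 1 * pd (fun y => U y 0) 1 x) + (U x 2 * pd (fun y => X₂ y 0) 2 x - X₂ x 2 * pd (fun y => U y 0) 2 x)) + thetaf g U 1 x * ((U x 0 * pd (fun y => X₂ y 1) 0 x - X₂ x 0 * pd (fun y => U y 1) 0 x) + (U x 1 * pd (fun y => X₂ y 1) 1 x - X₂ x 1 * pd (fun y => U y 1) 1 x) + (U x 2 * pd (fun y => X₂ y 1) 2 x - X₂ x 2 * pd (fun y => U y 1) 2 x)) + thetaf g U 2 x * ((U x 0 * pd (fun y => X₂ y 2) 0 x - X₂ x 0 * pd (fun y => U y 2) 0 x) + (U x 1 * pd (fun y => X₂ y 2) 1 x - X₂ x 1 * pd (fun y => U y 2) 1 x) + (U x 2 * pd (fun y => X₂ y 2) 2 x - X₂ x 2 * pd (fun y => U y 2) 2 x))) * U x 2) * DA12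
      + (-(thetaf g U 0 x * ((U x 0 * pd (fun y => X₂ y 0) 0 x - X₂ x 0 * pd (fun y => U y 0) 0 x) + (U x 1 * pd (fun y => X₂ y 0) 1 x - X₂ x 1 * pd (fun y => U y 0) 1 x) + (U x 2 * pd (fun y => X₂ y 0) 2 x - X₂ x 2 * pd (fun y => U y 0) 2 x)) + thetaf g U 1 x * ((U x 0 * pd (fun y => X₂ y 1) 0 x - X₂ x 0 * pd (fun y => U y 1) 0 x) + (U x 1 * pd (fun y => X₂ y 1) 1 x - X₂ x 1 * pd (fun y => U y 1) 1 x) + (U x 2 * pd (fun y => X₂ y 1) 2 x - X₂ x 2 * pd (fun y => U y 1) 2 x)) + thetaf g U 2 x * ((U x 0 * pd (fun y => X₂ y 2) 0 x - X₂ x 0 * pd (fun y => U y 2) 0 x) + (U x 1 * pd (fun y => X₂ y 2) 1 x - X₂ x 1 * pd (fun y => U y 2) 1 x) + (U x 2 * pd (fun y => X₂ y 2) 2 x - X₂ x 2 * pd (fun y => U y 2) 2 x))) * X₁ x 0) * DTu0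
      + (-(thetaf g U 0 x * ((U x 0 * pd (fun y => X₂ y 0) 0 x - X₂ x 0 * pd (fun y => U y 0) 0 x) + (U x 1 * pd (fun y => X₂ y 0) 1 x - X₂ x 1 * pd (fun y => U y 0) 1 x) + (U x 2 * pd (fun y => X₂ y 0) 2 x - X₂ x 2 * pd (fun y => U y 0) 2 x)) + thetaf g U 1 x * ((U x 0 * pd (fun y => X₂ y 1) 0 x - X₂ x 0 * pd (fun y => U y 1) 0 x) + (U x 1 * pd (fun y => X₂ y 1) 1 x - X₂ x 1 * pd (fun y => U y 1) 1 x) + (U x 2 * pd (fun y => X₂ y 1) 2 x - X₂ x 2 * pd (fun y => U y 1) 2 x)) + thetaf g U 2 x * ((U x 0 * pd (fun y => X₂ y 2) 0 x - X₂ x 0 * pd (fun y => U y 2) 0 x) + (U x 1 * pd (fun y => X₂ y 2) 1 x - X₂ x 1 * pd (fun y => U y 2) 1 x) + (U x 2 * pd (fun y => X₂ y 2) 2 x - X₂ x 2 * pd (fun y => U y 2) 2 x))) * X₁ x 1) * DTu1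
      + (-(thetaf g U 0 x * ((U x 0 * pd (fun y => X₂ y 0) 0 x - X₂ x 0 * pd (fun y => U y 0) 0 x) + (U x 1 * pd (fun y => X₂ y 0) 1 x - X₂ x 1 * pd (fun y => U y 0) 1 x) + (U x 2 * pd (fun y => X₂ y 0) 2 x - X₂ x 2 * pd (fun y => U y 0) 2 x)) + thetaf g U 1 x * ((U x 0 * pd (fun y => X₂ y 1) 0 x - X₂ x 0 * pd (fun y => U y 1) 0 x) + (U x 1 * pd (fun y => X₂ y 1) 1 x - X₂ x 1 * pd (fun y => U y 1) 1 x) + (U x 2 * pd (fun y => X₂ y 1) 2 x - X₂ x 2 * pd (fun y => U y 1) 2 x)) + thetaf g U 2 x * ((U x 0 * pd (fun y => X₂ y 2) 0 x - X₂ x 0 * pd (fun y => U y 2) 0 x) + (U x 1 * pd (fun y => X₂ y 2) 1 x - X₂ x 1 * pd (fun y => U y 2) 1 x) + (U x 2 * pd (fun y => X₂ y 2) 2 x - X₂ x 2 * pd (fun y => U y 2) 2 x))) * X₁ x 2) * DTu2
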